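/- For every n ≥ 1, the polynomial x^{2·3^n} + x^{3^n} + 1 is irreducible in ℤ/2ℤ[x]. -/

import Mathlib

open Polynomial

lemma two_pow_three_pow (k : ℕ) :
    ∃ t : ℤ, 2 ^ 3 ^ k = -1 + 3 ^ (k + 1) + 3 ^ (k + 2) * t := by
  induction k with
  | zero => exact ⟨0, by norm_num⟩
  | succ k ih =>
    obtain ⟨t, ht⟩ := ih
    refine ⟨t - 3 ^ k * (1 + 3 * t) ^ 2 + 3 ^ (2 * k) * (1 + 3 * t) ^ 3, ?_⟩
    have h1 : (2 : ℤ) ^ 3 ^ (k + 1) = (2 ^ 3 ^ k) ^ 3 := by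
      rw [← pow_mul, pow_succ]
    rw [h1, ht]
    ring

lemma orderOf_two_zmod (n : ℕ) (hn : 1 ≤ n) :
    orderOf (2 : ZMod (3 ^ (n + 1))) = 2 * 3 ^ n := by
  obtain ⟨k, rfl⟩ : ∃ k, n = k + 1 := ⟨n - 1, (Nat.succ_pred_eq_of_pos hn).symm⟩
  set m : ℕ := 3 ^ (k + 2) with hm
  haveI : NeZero m := ⟨pow_ne_zero _ (by norm_num)⟩
  have hm3 : ((3 : ZMod m)) ^ (k + 2) = 0 := by
    have := ZMod.natCast_self m
    push_cast [hm] at this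
    exact this
  -- 2 ^ 3 ^ (k+1) = -1 in ZMod m
  have hneg : (2 : ZMod m) ^ 3 ^ (k + 1) = -1 := by
    obtain ⟨t, ht⟩ := two_pow_three_pow (k + 1)
    have : ((2 : ℤ) ^ 3 ^ (k + 1) : ℤ) = -1 + 3 ^ (k + 2) + 3 ^ (k + 3) * t := ht
    have hcast := congrArg (fun z : ℤ => (z : ZMod m)) this
    push_cast at hcast
    rw [hcast, hm3]
    have h3 : ((3 : ZMod m)) ^ (k + 3) = 0 := by
      rw [show k + 3 = (k + 2) + 1 from rfl, pow_succ, hm3, zero_mul]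
    rw [h3]
    ring
  have hone : (2 : ZMod m) ^ (2 * 3 ^ (k + 1)) = 1 := by
    rw [mul_comm, pow_mul, hneg]
    ring
  -- 2 ^ (2 * 3 ^ k) ≠ 1
  have hsq : (2 : ZMod m) ^ (2 * 3 ^ k) = 1 - 2 * 3 ^ (k + 1) := by
    obtain ⟨t, ht⟩ := two_pow_three_pow k
    have key : (2 : ℤ) ^ (2 * 3 ^ k) =
        1 - 2 * 3 ^ (k + 1) + 3 ^ (k + 2) *
          (3 ^ k + 3 ^ (k + 2) * t ^ 2 - 2 * t + 2 * 3 ^ (k + 1) * t) := by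
      rw [mul_comm, pow_mul, ht]
      ring
    have hcast := congrArg (fun z : ℤ => (z : ZMod m)) key
    push_cast at hcast
    rw [hcast, hm3]
    ring
  have hne : (2 : ZMod m) ^ (2 * 3 ^ k) ≠ 1 := by
    rw [hsq]
    intro h
    have h2 : ((2 * 3 ^ (k + 1) : ℕ) : ZMod m) = 0 := by
      push_cast
      linear_combination -h
    rw [ZMod.natCast_eq_zero_iff] at h2
    have hle := Nat.le_of_dvd (by positivity) h2
    have hm' : m = 3 * 3 ^ (k + 1) := by rw [hm]; ring
    have hp : 0 < (3:ℕ) ^ (k + 1) := Nat.pow_pos (by norm_num)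
    omega
  have hne2 : (2 : ZMod m) ^ (3 ^ (k + 1)) ≠ 1 := by
    rw [hneg]
    intro h
    have h2 : ((2 : ℕ) : ZMod m) = 0 := by
      push_cast
      linear_combination -h
    rw [ZMod.natCast_eq_zero_iff] at h2
    have hle := Nat.le_of_dvd (by norm_num) h2
    have : 9 ≤ (3:ℕ) ^ (k + 2) := by
      calc (9:ℕ) = 3 ^ 2 := by norm_num
      _ ≤ 3 ^ (k + 2) := Nat.pow_le_pow_right (by norm_num) (by omega)
    omega
  -- now pin down the order
  have hdvd : orderOf (2 : ZMod m) ∣ 2 * 3 ^ (k + 1) := orderOf_dvd_of_pow_eq_one hone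
  have h2d : 2 ∣ orderOf (2 : ZMod m) := by
    by_contra h2d
    have hcop : Nat.Coprime (orderOf (2 : ZMod m)) 2 :=
      ((Nat.prime_two.coprime_iff_not_dvd).2 h2d).symm
    have : orderOf (2 : ZMod m) ∣ 3 ^ (k + 1) := hcop.dvd_of_dvd_mul_left hdvd
    exact hne2 (orderOf_dvd_iff_pow_eq_one.1 this)
  obtain ⟨e, hde⟩ := h2d
  have he : e ∣ 3 ^ (k + 1) := by
    rw [hde] at hdvd
    exact (mul_dvd_mul_iff_left (two_ne_zero)).1 hdvd
  obtain ⟨b, hb, hbe⟩ := (Nat.dvd_prime_pow Nat.prime_three).1 he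
  have hbn : b = k + 1 := by
    by_contra hbne
    have : orderOf (2 : ZMod m) ∣ 2 * 3 ^ k := by
      rw [hde, hbe]
      exact mul_dvd_mul_left 2 (pow_dvd_pow 3 (by omega))
    exact hne (orderOf_dvd_iff_pow_eq_one.1 this)
  rw [hde, hbe, hbn]

theorem irreducible_cyclotomic_like (n : ℕ) (hn : 1 ≤ n) :
    Irreducible (X ^ (2 * 3 ^ n) + X ^ (3 ^ n) + 1 : (ZMod 2)[X]) := by
  have hpoly : (X ^ (2 * 3 ^ n) + X ^ (3 ^ n) + 1 : (ZMod 2)[X]) =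
      cyclotomic (3 ^ (n + 1)) (ZMod 2) := by
    rw [cyclotomic_prime_pow_eq_geom_sum Nat.prime_three]
    rw [Finset.sum_range_succ, Finset.sum_range_succ, Finset.sum_range_one]
    ring
  rw [hpoly]
  set m : ℕ := 3 ^ (n + 1) with hm
  haveI : NeZero m := ⟨pow_ne_zero _ (by norm_num)⟩
  set f : (ZMod 2)[X] := cyclotomic m (ZMod 2) with hf
  have hdegf : f.natDegree = 2 * 3 ^ n := by
    rw [hf, natDegree_cyclotomic, hm, Nat.totient_prime_pow Nat.prime_three (by omega),
      Nat.add_sub_cancel]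
    norm_num [mul_comm]
  have hf0 : f ≠ 0 := cyclotomic_ne_zero m (ZMod 2)
  have hfu : ¬IsUnit f := by
    intro hu
    have := natDegree_eq_zero_of_isUnit hu
    rw [hdegf] at this
    have : 0 < 3 ^ n := Nat.pow_pos (by norm_num)
    omega
  obtain ⟨g, hgi, h, hgh⟩ : ∃ g, Irreducible g ∧ ∃ h, f = g * h := by
    obtain ⟨g, hgi, h, hgh⟩ := WfDvdMonoid.exists_irreducible_factor hfu hf0
    exact ⟨g, hgi, h, hgh⟩
  haveI : Fact (Irreducible g) := ⟨hgi⟩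
  -- build the field K = AdjoinRoot g
  set K := AdjoinRoot g with hK
  have hg0 : g ≠ 0 := hgi.ne_zero
  let pb : PowerBasis (ZMod 2) K := AdjoinRoot.powerBasis hg0
  haveI : Fintype K := Module.fintypeOfFintype pb.basis
  haveI : CharP K 2 := charP_of_injective_algebraMap (algebraMap (ZMod 2) K).injective 2
  haveI : NeZero (m : K) := by
    constructor
    intro h2m'
    rw [CharP.cast_eq_zero_iff K 2 m] at h2m'
    have h2m := h2m'
    have := Nat.Prime.dvd_of_dvd_pow (p := 2) (m := 3) (n := n + 1) Nat.prime_two h2m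
    omega
  -- the root of g in K is a primitive m-th root of unity
  have hroot : IsRoot (cyclotomic m K) (AdjoinRoot.root g) := by
    have h1 : Polynomial.map (algebraMap (ZMod 2) K) f = cyclotomic m K := map_cyclotomic _ _
    have h2 : (Polynomial.map (algebraMap (ZMod 2) K) f).IsRoot (AdjoinRoot.root g) := by
      rw [hgh, Polynomial.map_mul]
      have : (Polynomial.map (algebraMap (ZMod 2) K) g).IsRoot (AdjoinRoot.root g) := by
        rw [IsRoot.def, eval_map, AdjoinRoot.algebraMap_eq]
        exact AdjoinRoot.eval₂_root g
      simp [IsRoot.def] at this ⊢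
      left
      exact this
    rwa [h1] at h2
  have hprim : IsPrimitiveRoot (AdjoinRoot.root g) m :=
    (isRoot_cyclotomic_iff).1 hroot
  -- order of the root is m, so m ∣ card Kˣ = 2 ^ deg g - 1
  have hmpos : 0 < m := Nat.pow_pos (by norm_num)
  have hunit : IsUnit (AdjoinRoot.root g) := hprim.isUnit hmpos.ne'
  obtain ⟨u, hu⟩ := hunit
  have horder : orderOf u = m := by
    have h1 : orderOf (AdjoinRoot.root g) = m := (hprim.eq_orderOf).symm
    rw [← h1, ← hu, orderOf_units]
  have hcardK : Fintype.card K = 2 ^ g.natDegree := by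
    have h1 : Fintype.card K = Fintype.card (ZMod 2) ^ Module.finrank (ZMod 2) K :=
      Module.card_eq_pow_finrank
    rw [h1, ZMod.card, pb.finrank, AdjoinRoot.powerBasis_dim]
  have hdvdcard : m ∣ 2 ^ g.natDegree - 1 := by
    have h1 : orderOf u ∣ Fintype.card Kˣ := orderOf_dvd_card
    rwa [horder, Fintype.card_units, hcardK] at h1
  -- so 2 ^ deg g = 1 in ZMod m, hence 2 * 3 ^ n ∣ deg g
  have hpow1 : (2 : ZMod m) ^ g.natDegree = 1 := by
    have h1 : (1 : ℕ) ≤ 2 ^ g.natDegree := Nat.one_le_two_pow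
    have h2 : (1 : ℕ) ≡ 2 ^ g.natDegree [MOD m] := (Nat.modEq_iff_dvd' h1).2 hdvdcard
    have h3 : ((2 ^ g.natDegree : ℕ) : ZMod m) = ((1 : ℕ) : ZMod m) :=
      (ZMod.natCast_eq_natCast_iff _ _ _).2 h2.symm
    push_cast at h3
    exact h3
  have hdg : 2 * 3 ^ n ∣ g.natDegree := by
    have := orderOf_dvd_of_pow_eq_one hpow1
    rwa [orderOf_two_zmod n hn] at this
  have hdgpos : 0 < g.natDegree :=
    natDegree_pos_iff_degree_pos.2 (degree_pos_of_irreducible hgi)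
  have hle : f.natDegree ≤ g.natDegree := by
    rw [hdegf]
    exact Nat.le_of_dvd hdgpos hdg
  -- conclude h is a unit
  have hh0 : h ≠ 0 := by
    intro h0
    rw [h0, mul_zero] at hgh
    exact hf0 hgh
  have hdegh : h.natDegree = 0 := by
    have := natDegree_mul hg0 hh0
    rw [← hgh] at this
    omega
  have hhu : IsUnit h := by
    rw [isUnit_iff_degree_eq_zero, degree_eq_natDegree hh0, hdegh]
    rfl
  have hassoc : Associated g f := by
    rw [hgh]
    exact associated_mul_unit_right g h hhu
  exact hassoc.irreducible hgi
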